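/- Let R be a commutative ring, n a natural number, E the exterior algebra of Fin n → R with generators ι(e_i) and ordered basis products v_I for I ⊆ Fin n, and reverse the canonical anti-automorphism. Then for every I : Finset (Fin n), reverse(v_I) · v_{Iᶜ} = (−1)^(Σ_{i ∈ I} i) • v_{univ}, where the exponent is the sum of the elements of I as natural numbers (0-indexed; this equals the paper's (ΣI) − |I| under 1-indexing) and v_{univ} is the product of all generators in increasing order. -/

import Mathlib

open CliffordAlgebra

/-- The ordered basis product `v_I` in the exterior algebra of `Fin n → R`, realized as the
Clifford algebra of the zero quadratic form: the product, in increasing order of indices,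
of the generators `ι (Pi.single i 1)` for `i ∈ I`. -/
noncomputable def vI {R : Type*} [CommRing R] {n : ℕ} (I : Finset (Fin n)) :
    CliffordAlgebra (0 : QuadraticForm R (Fin n → R)) :=
  ((I.sort (· ≤ ·)).map fun i =>
    CliffordAlgebra.ι (0 : QuadraticForm R (Fin n → R)) (Pi.single i (1 : R))).prod

namespace RVAux

variable {R : Type*} [CommRing R] {n : ℕ}

noncomputable def f (R : Type*) [CommRing R] {n : ℕ} (i : Fin n) :
    CliffordAlgebra (0 : QuadraticForm R (Fin n → R)) :=
  CliffordAlgebra.ι (0 : QuadraticForm R (Fin n → R)) (Pi.single i 1)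

noncomputable def P (R : Type*) [CommRing R] {n : ℕ} (l : List (Fin n)) :
    CliffordAlgebra (0 : QuadraticForm R (Fin n → R)) :=
  (l.map (f R)).prod

lemma P_nil : P R ([] : List (Fin n)) = 1 := rfl

lemma P_cons (a : Fin n) (l : List (Fin n)) : P R (a :: l) = f R a * P R l := by
  simp [P]

lemma P_append (l₁ l₂ : List (Fin n)) : P R (l₁ ++ l₂) = P R l₁ * P R l₂ := by
  simp [P]

lemma anticomm (a b : Fin n) : f R a * f R b = - (f R b * f R a) :=
  CliffordAlgebra.ι_mul_ι_comm_of_isOrtho (QuadraticMap.IsOrtho.all _ _)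

lemma f_mul_P (i : Fin n) (l : List (Fin n)) :
    f R i * P R l = (-1 : R) ^ l.length • (P R l * f R i) := by
  induction l with
  | nil => simp [P_nil]
  | cons a l ih =>
    rw [P_cons, ← mul_assoc, anticomm i a, neg_mul, mul_assoc, ih]
    rw [List.length_cons, pow_succ, mul_smul, neg_one_smul, smul_neg, mul_smul_comm,
      ← mul_assoc]

lemma reverse_f (a : Fin n) :
    reverse (Q := (0 : QuadraticForm R (Fin n → R))) (f R a) = f R a :=
  reverse_ι _

lemma reverse_P (l : List (Fin n)) :
    reverse (Q := (0 : QuadraticForm R (Fin n → R))) (P R l) = P R l.reverse := by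
  induction l with
  | nil => simp [P_nil]
  | cons a l ih =>
    rw [P_cons, reverse.map_mul, ih, reverse_f, List.reverse_cons, P_append, P_cons, P_nil,
      mul_one]

lemma vI_eq (I : Finset (Fin n)) : vI (R := R) I = P R (I.sort (· ≤ ·)) := rfl

end RVAux

open RVAux in
theorem reverse_vI_mul_vI_compl {R : Type*} [CommRing R] {n : ℕ} (I : Finset (Fin n)) :
    reverse (vI (R := R) I) * vI Iᶜ =
      ((-1 : R) ^ (∑ i ∈ I, (i : ℕ))) • vI (Finset.univ : Finset (Fin n)) := by
  induction I using Finset.strongInduction with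
  | _ I ih =>
  rcases I.eq_empty_or_nonempty with rfl | hI
  · simp [vI_eq, P_nil, Finset.sort_empty]
  · set i := I.min' hI with hidef
    have hiI : i ∈ I := I.min'_mem hI
    set I' := I.erase i with hI'def
    have hiI' : i ∉ I' := Finset.notMem_erase _ _
    have hins : insert i I' = I := Finset.insert_erase hiI
    have hsub : I' ⊂ I := Finset.erase_ssubset hiI
    -- sort I = i :: sort I'
    have hsortI : I.sort (· ≤ ·) = i :: I'.sort (· ≤ ·) := by
      rw [← hins,
        Finset.sort_insert _ (fun b hb => I.min'_le b (hins ▸ Finset.mem_insert_of_mem hb)) hiI']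
    -- decompose sort Iᶜ
    set l := Iᶜ.sort (· ≤ ·) with hldef
    set l₁ := l.filter (fun j => decide (j < i)) with hl₁def
    set l₂ := l.filter (fun j => !decide (j < i)) with hl₂def
    have hsortedl : l.Pairwise (· ≤ ·) := Finset.pairwise_sort _ _
    have hmem₁ : ∀ a ∈ l₁, a < i := by
      intro a ha
      have := List.of_mem_filter ha
      simpa using this
    have hmem₂ : ∀ a ∈ l₂, i ≤ a := by
      intro a ha
      have := List.of_mem_filter ha
      simpa using this
    have hl : l₁ ++ l₂ = l := by
      refine List.Perm.eq_of_pairwise' ?_ hsortedl (List.filter_append_perm _ l)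
      rw [List.pairwise_append]
      exact ⟨hsortedl.filter _, hsortedl.filter _,
        fun a ha b hb => le_of_lt (lt_of_lt_of_le (hmem₁ a ha) (hmem₂ b hb))⟩
    have hl₁len : l₁.length = (i : ℕ) := by
      have h1 : l₁.length = (Iᶜ.filter (fun j => j < i)).card := by
        rw [Finset.card, Finset.filter_val, ← Finset.sort_eq Iᶜ (· ≤ ·), ← hldef, hl₁def]
        simp
      have h2 : Iᶜ.filter (fun j => j < i) = Finset.Iio i := by
        ext j
        simp only [Finset.mem_filter, Finset.mem_compl, Finset.mem_Iio]
        exact ⟨fun h => h.2, fun h => ⟨fun hj => absurd (I.min'_le j hj) (not_le.mpr h), h⟩⟩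
      rw [h1, h2, Fin.card_Iio]
    have hcompl : I'ᶜ = insert i Iᶜ := by
      rw [hI'def, Finset.compl_erase]
    have hiIc : i ∉ Iᶜ := by simp [hiI]
    -- sort I'ᶜ = l₁ ++ i :: l₂
    have hsortI'c : I'ᶜ.sort (· ≤ ·) = l₁ ++ i :: l₂ := by
      have hperm1 : List.Perm (I'ᶜ.sort (· ≤ ·)) (i :: l) := by
        rw [← Multiset.coe_eq_coe, ← Multiset.cons_coe, hldef, Finset.sort_eq, Finset.sort_eq,
          hcompl, Finset.insert_val_of_notMem hiIc]
      have hperm : List.Perm (I'ᶜ.sort (· ≤ ·)) (l₁ ++ i :: l₂) :=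
        hperm1.trans (by rw [← hl]; exact List.perm_middle.symm)
      refine List.Perm.eq_of_pairwise' (Finset.pairwise_sort _ _) ?_ hperm
      refine List.pairwise_append.mpr ⟨hsortedl.filter _, ?_, ?_⟩
      · exact List.pairwise_cons.mpr ⟨hmem₂, hsortedl.filter _⟩
      · intro a ha b hb
        rcases List.mem_cons.mp hb with rfl | hb
        · exact le_of_lt (hmem₁ a ha)
        · exact le_of_lt (lt_of_lt_of_le (hmem₁ a ha) (hmem₂ b hb))
    have key : f R i * P R l = ((-1 : R) ^ (i : ℕ)) • P R (I'ᶜ.sort (· ≤ ·)) := by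
      rw [← hl, P_append, ← mul_assoc, f_mul_P, hl₁len, smul_mul_assoc, hsortI'c, P_append,
        P_cons, mul_assoc]
    calc reverse (vI (R := R) I) * vI Iᶜ
        = (P R (I'.sort (· ≤ ·)).reverse * f R i) * P R l := by
          rw [vI_eq I, hsortI, reverse_P, List.reverse_cons, P_append, P_cons, P_nil, mul_one,
            vI_eq Iᶜ]
      _ = P R (I'.sort (· ≤ ·)).reverse * (f R i * P R l) := by rw [mul_assoc]
      _ = P R (I'.sort (· ≤ ·)).reverse * (((-1 : R) ^ (i : ℕ)) • P R (I'ᶜ.sort (· ≤ ·))) := by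
          rw [key]
      _ = ((-1 : R) ^ (i : ℕ)) • (reverse (vI (R := R) I') * vI I'ᶜ) := by
          rw [mul_smul_comm, vI_eq I', reverse_P, vI_eq I'ᶜ]
      _ = ((-1 : R) ^ (i : ℕ)) • (((-1 : R) ^ (∑ j ∈ I', (j : ℕ))) • vI Finset.univ) := by
          rw [ih I' hsub]
      _ = ((-1 : R) ^ (∑ i ∈ I, (i : ℕ))) • vI (Finset.univ : Finset (Fin n)) := by
          rw [smul_smul, ← pow_add]
          congr 2
          rw [← hins, Finset.sum_insert hiI']
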